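/- Let 𝒜 = (Q, Σ, Δ, Q₀, Q_f) be a complete NFA and let A_𝒜 be the associated blindfold game with opacity condition (positions Q ∪ {q₀}, Δ′(q₀,a) = Q₀, Δ′(q,a) = Δ(q,a), secrets S = Q ∖ (Q_f ∪ {q₀})). Then 𝒜 is universal (ℒ(𝒜) = Σ*) if and only if every strategy of Defender in A_𝒜 is winning, i.e., for all strategies β of Defender and α of Intruder, the play α⌢β is S-opaque. -/

import Mathlib

/-- An imperfect-information game structure `(V, Δ, obs, act, v₀)`. -/
structure GameStruct (V A Γ : Type) where
  trans : V → A → Set V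
  trans_ne : ∀ v a, (trans v a).Nonempty
  obs : V → Γ
  act : Γ → Set A
  act_ne : ∀ γ, (act γ).Nonempty
  init : V

namespace GameStruct

variable {V A Γ : Type} (G : GameStruct V A Γ)

/-- Legality of an infinite play `v₀ a₁ v₁ a₂ v₂ …` given by `pos k = v_k`,
`acts k = a_{k+1}`. -/
def IsPlay (pos : ℕ → V) (acts : ℕ → A) : Prop :=
  pos 0 = G.init ∧
    ∀ n, acts n ∈ G.act (G.obs (pos n)) ∧ pos (n + 1) ∈ G.trans (pos n) (acts n)

/-- Information set of Intruder after `n` rounds: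
`I(ρ⁰) = {v₀}`, `I(ρ^{k+1}) = Δ(I(ρ^k), a_{k+1}) ∩ obs⁻¹(obs v_{k+1})`. -/
def infoSet (pos : ℕ → V) (acts : ℕ → A) : ℕ → Set V
  | 0 => {G.init}
  | n + 1 =>
      {v | (∃ u ∈ infoSet pos acts n, v ∈ G.trans u (acts n)) ∧
            G.obs v = G.obs (pos (n + 1))}

/-- Blindfold: all positions share the same observation. -/
def Blindfold : Prop := ∀ v w : V, G.obs v = G.obs w

/-- `Δ({v₀}, a₁…aₙ)`: positions reachable from the initial position under the
action word. -/
def reach (acts : ℕ → A) : ℕ → Set V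
  | 0 => {G.init}
  | n + 1 => {v | ∃ u ∈ reach acts n, v ∈ G.trans u (acts n)}

/-- Observation-based strategy of Intruder: chooses an available action from the
sequence of observations seen so far (most recent first). -/
structure IStrat where
  f : List Γ → A
  valid : ∀ (h : List Γ) (γ : Γ), f (γ :: h) ∈ G.act γ

/-- Perfect-information strategy of Defender: chooses a legal next position from
the history of positions (most recent first) and the chosen action. -/
structure DStrat where
  g : List V → A → V
  valid : ∀ (h : List V) (v : V) (a : A), g (v :: h) a ∈ G.trans v a

variable [Inhabited V]

/-- History of positions (most recent first) of the play `α ⌢ β`. -/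
def hist (α : G.IStrat) (β : G.DStrat) : ℕ → List V
  | 0 => [G.init]
  | n + 1 =>
      (β.g (hist α β n) (α.f ((hist α β n).map G.obs))) :: hist α β n

/-- `k`-th position of the play `α ⌢ β`. -/
def playPos (α : G.IStrat) (β : G.DStrat) (n : ℕ) : V := (G.hist α β n).headI

/-- `(k+1)`-th action of the play `α ⌢ β`. -/
def playAct (α : G.IStrat) (β : G.DStrat) (n : ℕ) : A :=
  α.f ((G.hist α β n).map G.obs)

/-- Information sets along the play `α ⌢ β`. -/
def playInfo (α : G.IStrat) (β : G.DStrat) : ℕ → Set V :=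
  G.infoSet (G.playPos α β) (G.playAct α β)

/-- The play `α ⌢ β` is `S`-opaque: the information set is never included in `S`. -/
def Opaque (S : Set V) (α : G.IStrat) (β : G.DStrat) : Prop :=
  ∀ k, ¬ G.playInfo α β k ⊆ S

end GameStruct

/-- A complete nondeterministic finite automaton. -/
structure CNFA (Q A : Type) where
  step : Q → A → Set Q
  start : Set Q
  accept : Set Q
  complete : ∀ q a, (step q a).Nonempty

namespace CNFA

variable {Q A : Type}

/-- `Δ(P, w)`: subset construction, extended to words. -/
def listStep (N : CNFA Q A) (P : Set Q) : List A → Set Q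
  | [] => P
  | a :: w => N.listStep {q' | ∃ q ∈ P, q' ∈ N.step q a} w

/-- The blindfold game with opacity condition `A_𝒜` associated with a complete
NFA: positions are `Q ∪ {q₀}` (`none` is the fresh initial position `q₀`),
`Δ'(q₀,a) = Q₀`, `Δ'(q,a) = Δ(q,a)`, a single observation, all actions
available. -/
def game (N : CNFA Q A) (h0 : N.start.Nonempty) [Nonempty A] :
    GameStruct (Option Q) A Unit where
  trans v a :=
    match v with
    | none => some '' N.start
    | some q => some '' N.step q a
  trans_ne v a := by
    cases v with
    | none => exact h0.image _
    | some q => exact (N.complete q a).image _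
  obs _ := ()
  act _ := Set.univ
  act_ne _ := ⟨Classical.arbitrary A, trivial⟩
  init := none

/-- The secret positions `S = Q ∖ (Q_f ∪ {q₀})`. -/
def secrets (N : CNFA Q A) : Set (Option Q) :=
  {v | ∃ q, v = some q ∧ q ∉ N.accept}

end CNFA

lemma GameStruct.hist_length {V A Γ : Type} (G : GameStruct V A Γ) [Inhabited V]
    (α : G.IStrat) (β : G.DStrat) (n : ℕ) : (G.hist α β n).length = n + 1 := by
  induction n with
  | zero => rfl
  | succ n ih => simp [GameStruct.hist, ih]

lemma CNFA.listStep_concat {Q A : Type} (N : CNFA Q A) (P : Set Q) (w : List A)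
    (a : A) : N.listStep P (w ++ [a]) =
      {q' | ∃ q ∈ N.listStep P w, q' ∈ N.step q a} := by
  induction w generalizing P with
  | nil => rfl
  | cons b w ih => exact ih _

lemma infoSet_succ_eq {Q A : Type} [Nonempty A] (N : CNFA Q A)
    (h0 : N.start.Nonempty) (pos : ℕ → Option Q) (acts : ℕ → A) (n : ℕ) :
    (N.game h0).infoSet pos acts (n + 1) =
      some '' N.listStep N.start ((List.range n).map fun i => acts (i + 1)) := by
  induction n with
  | zero =>
    ext v
    simp only [GameStruct.infoSet, CNFA.game, List.range_zero, List.map_nil,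
      CNFA.listStep, Set.mem_setOf_eq, Set.mem_singleton_iff]
    constructor
    · rintro ⟨⟨u, rfl, hv⟩, -⟩; exact hv
    · rintro hv; exact ⟨⟨none, rfl, hv⟩, trivial⟩
  | succ n ih =>
    have hstep : (N.game h0).infoSet pos acts (n + 2) =
        {v | ∃ u ∈ (N.game h0).infoSet pos acts (n + 1),
          v ∈ (N.game h0).trans u (acts (n + 1))} := by
      ext v
      constructor
      · rintro ⟨h, -⟩; exact h
      · intro h; exact ⟨h, rfl⟩
    rw [hstep, ih, List.range_succ, List.map_append, List.map_cons,
      List.map_nil, N.listStep_concat]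
    ext v
    constructor
    · rintro ⟨u, ⟨q, hq, rfl⟩, hv⟩
      obtain ⟨q', hq', rfl⟩ : v ∈ some '' N.step q (acts (n + 1)) := hv
      exact ⟨q', ⟨q, hq, hq'⟩, rfl⟩
    · rintro ⟨q', ⟨q, hq, hq'⟩, rfl⟩
      exact ⟨some q, ⟨q, hq, rfl⟩, ⟨q', hq', rfl⟩⟩

/-- A complete NFA `𝒜` is universal iff every strategy of Defender in the
associated blindfold game with opacity condition `A_𝒜` is winning. -/
theorem nfa_universal_iff_all_strategies_winning {Q A : Type} [Nonempty A]
    (N : CNFA Q A) (h0 : N.start.Nonempty) :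
    (∀ w : List A, (N.listStep N.start w ∩ N.accept).Nonempty) ↔
      ∀ (β : (N.game h0).DStrat) (α : (N.game h0).IStrat),
        (N.game h0).Opaque N.secrets α β := by
  classical
  constructor
  · intro huniv β α k
    cases k with
    | zero =>
      intro hsub
      have hmem : (none : Option Q) ∈ (N.game h0).playInfo α β 0 := rfl
      obtain ⟨q, hq, -⟩ := hsub hmem
      exact (Option.some_ne_none q) hq.symm
    | succ n =>
      intro hsub
      obtain ⟨q, hq1, hq2⟩ :=
        huniv ((List.range n).map fun i => (N.game h0).playAct α β (i + 1))
      have hmem : (some q : Option Q) ∈ (N.game h0).playInfo α β (n + 1) := by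
        rw [GameStruct.playInfo, infoSet_succ_eq]
        exact ⟨q, hq1, rfl⟩
      obtain ⟨q', hq', hq'a⟩ := hsub hmem
      exact hq'a (Option.some_injective Q hq' ▸ hq2)
  · intro hwin w
    set a0 : A := Classical.arbitrary A with ha0
    let α : (N.game h0).IStrat :=
      { f := fun l => w.getD (l.length - 2) a0
        valid := fun _ _ => Set.mem_univ _ }
    let β : (N.game h0).DStrat :=
      { g := fun h a =>
          match h with
          | [] => none
          | v :: _ => ((N.game h0).trans_ne v a).some
        valid := fun h v a => ((N.game h0).trans_ne v a).some_mem }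
    have hact : ∀ n, (N.game h0).playAct α β n = w.getD (n - 1) a0 := by
      intro n
      show w.getD ((((N.game h0).hist α β n).map _).length - 2) a0 = _
      rw [List.length_map, GameStruct.hist_length]
      congr 1
    have hW : (List.range w.length).map
        (fun i => (N.game h0).playAct α β (i + 1)) = w := by
      apply List.ext_getElem
      · simp
      · intro i h1 h2
        simp only [List.getElem_map, List.getElem_range]
        rw [hact]
        simp only [Nat.add_sub_cancel]
        rw [List.getD_eq_getElem _ _ h2]
    have hop := hwin β α (w.length + 1)
    rw [GameStruct.playInfo, infoSet_succ_eq, hW] at hop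
    obtain ⟨v, hv, hvs⟩ := Set.not_subset.mp hop
    obtain ⟨q, hq, rfl⟩ := hv
    refine ⟨q, hq, ?_⟩
    by_contra hqa
    exact hvs ⟨q, rfl, hqa⟩
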